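/- arXiv:2312.06533 — 3 statements merged into one kernel-verified Lean document; each statement's English description precedes it below -/
import Mathlib

section
/- Let F : [0,∞) → ℝ be nondecreasing with Laplace transform f(s) = ∫_0^∞ e^{-st}F(t)dt existing for all s > 0. If F(t) ~ (C/Γ(α+1))·t^α as t → ∞ for some α ≥ 0 and C > 0, then s·f(s) ~ C/s^α as s → 0⁺. -/
open Filter MeasureTheory Real

/-- Abelian direction of the Hardy–Littlewood–Karamata theorem: if `F` is
nondecreasing with Laplace transform `f(s) = ∫_0^∞ e^{-st} F(t) dt` existing
for all `s > 0`, and `F(t) ~ (C/Γ(α+1))·t^α` as `t → ∞`, then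
`s·f(s) ~ C/s^α` as `s → 0⁺`. -/
theorem abelian_laplace_transform (F : ℝ → ℝ) (hmono : MonotoneOn F (Set.Ici 0))
    (hint : ∀ s : ℝ, 0 < s →
      IntegrableOn (fun t => Real.exp (-s * t) * F t) (Set.Ioi 0))
    (α C : ℝ) (hα : 0 ≤ α) (hC : 0 < C)
    (hF : Tendsto (fun t : ℝ => F t / (C / Real.Gamma (α + 1) * t ^ α))
      atTop (nhds 1)) :
    Tendsto (fun s : ℝ =>
        (s * ∫ t in Set.Ioi (0 : ℝ), Real.exp (-s * t) * F t) / (C / s ^ α))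
      (nhdsWithin 0 (Set.Ioi 0)) (nhds 1) := by
  have hΓ : 0 < Real.Gamma (α + 1) := Real.Gamma_pos_of_pos (by linarith)
  set G : ℝ → ℝ → ℝ := fun s u => (s ^ α / C) * (Real.exp (-u) * F (u / s)) with hG
  -- Step A: change of variables
  have stepA : ∀ s : ℝ, 0 < s →
      (s * ∫ t in Set.Ioi (0 : ℝ), Real.exp (-s * t) * F t) / (C / s ^ α)
        = ∫ u in Set.Ioi (0 : ℝ), G s u := by
    intro s hs
    have hsα : (0:ℝ) < s ^ α := Real.rpow_pos_of_pos hs α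
    have hsub := integral_comp_mul_left_Ioi (fun u => Real.exp (-u) * F (u / s)) 0 hs
    simp only [mul_zero, smul_eq_mul] at hsub
    have heq : ∀ t : ℝ, Real.exp (-(s * t)) * F (s * t / s) = Real.exp (-s * t) * F t := by
      intro t
      rw [mul_div_cancel_left₀ _ (ne_of_gt hs), neg_mul]
    simp only [heq] at hsub
    rw [hG]
    rw [MeasureTheory.integral_const_mul]
    rw [hsub]
    field_simp
  -- pointwise limit function
  set g : ℝ → ℝ := fun u => Real.exp (-u) * u ^ α / Real.Gamma (α + 1) with hg
  have hint_g : ∫ u in Set.Ioi (0:ℝ), g u = 1 := by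
    have := Real.Gamma_eq_integral (by linarith : (0:ℝ) < α + 1)
    simp only [add_sub_cancel_right] at this
    rw [hg]
    simp only [MeasureTheory.integral_div, ← this, div_self (ne_of_gt hΓ)]
  -- eventual bounds on F from hF
  have hev : ∀ᶠ t in atTop,
      F t / (C / Real.Gamma (α + 1) * t ^ α) ∈ Set.Icc (1/2 : ℝ) 2 :=
    hF.eventually (Icc_mem_nhds (by norm_num) (by norm_num))
  obtain ⟨T₀, hT₀⟩ := eventually_atTop.mp hev
  set T : ℝ := max T₀ 1 with hTdef
  have hT1 : (1:ℝ) ≤ T := le_max_right _ _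
  have hT0 : (0:ℝ) ≤ T := le_trans zero_le_one hT1
  have hTb : ∀ t : ℝ, T ≤ t → 0 ≤ F t ∧ F t ≤ 2 * (C / Real.Gamma (α + 1) * t ^ α) := by
    intro t ht
    have h0 : (0:ℝ) < t := lt_of_lt_of_le one_pos (hT1.trans ht)
    have htα : (0:ℝ) < C / Real.Gamma (α + 1) * t ^ α :=
      mul_pos (div_pos hC hΓ) (Real.rpow_pos_of_pos h0 α)
    have h := hT₀ t ((le_max_left _ _).trans ht)
    constructor
    · have := (le_div_iff₀ htα).mp h.1
      nlinarith
    · have := (div_le_iff₀ htα).mp h.2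
      linarith
  set M : ℝ := max |F 0| |F T| with hMdef
  have hM0 : (0:ℝ) ≤ M := le_trans (abs_nonneg _) (le_max_left _ _)
  set bound : ℝ → ℝ := fun u =>
    Real.exp (-u) * (M / C) + 2 / Real.Gamma (α + 1) * (Real.exp (-u) * u ^ α) with hbd
  -- measurability
  have hmeas : ∀ᶠ s in nhdsWithin (0:ℝ) (Set.Ioi 0),
      AEStronglyMeasurable (G s) (volume.restrict (Set.Ioi 0)) := by
    filter_upwards [self_mem_nhdsWithin] with s hs
    have hs : (0:ℝ) < s := hs
    have hm : MonotoneOn (fun u => F (u / s)) (Set.Ioi 0) := by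
      intro x hx y hy hxy
      exact hmono (div_nonneg (le_of_lt hx) hs.le) (div_nonneg (le_of_lt hy) hs.le)
        (by gcongr)
    have hae : AEMeasurable (fun u => F (u / s)) (volume.restrict (Set.Ioi 0)) :=
      aemeasurable_restrict_of_monotoneOn measurableSet_Ioi hm
    exact (aemeasurable_const.mul
      (((Real.measurable_exp.comp measurable_neg).aemeasurable).mul hae)).aestronglyMeasurable
  -- domination
  have hbound : ∀ᶠ s in nhdsWithin (0:ℝ) (Set.Ioi 0),
      ∀ᵐ u ∂(volume.restrict (Set.Ioi 0)), ‖G s u‖ ≤ bound u := by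
    filter_upwards [Ioo_mem_nhdsGT_of_mem (Set.left_mem_Ico.mpr one_pos)] with s hs
    filter_upwards [ae_restrict_mem measurableSet_Ioi] with u hu
    have hu : (0:ℝ) < u := hu
    have he : (0:ℝ) < Real.exp (-u) := Real.exp_pos _
    have hsα : (0:ℝ) < s ^ α := Real.rpow_pos_of_pos hs.1 α
    have hsα1 : s ^ α ≤ 1 := Real.rpow_le_one hs.1.le hs.2.le hα
    have ht : (0:ℝ) < u / s := div_pos hu hs.1
    have hst : s ^ α * (u / s) ^ α = u ^ α := by
      rw [← Real.mul_rpow hs.1.le ht.le]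
      congr 1
      rw [mul_comm]
      exact div_mul_cancel₀ u (ne_of_gt hs.1)
    rw [hG]
    rw [Real.norm_eq_abs, abs_mul, abs_mul, abs_of_pos (div_pos hsα hC), abs_of_pos he]
    rcases le_or_gt T (u / s) with h | h
    · obtain ⟨h0F, hFle⟩ := hTb _ h
      rw [abs_of_nonneg h0F]
      calc s ^ α / C * (Real.exp (-u) * F (u / s))
          ≤ s ^ α / C * (Real.exp (-u) * (2 * (C / Real.Gamma (α + 1) * (u / s) ^ α))) := by
            gcongr
        _ = 2 / Real.Gamma (α + 1) * (Real.exp (-u) * u ^ α) := by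
            rw [← hst]; field_simp
        _ ≤ bound u := by
            have h1 : (0:ℝ) ≤ Real.exp (-u) * (M / C) := by positivity
            rw [hbd]; dsimp only; linarith
    · have hFt : |F (u / s)| ≤ M := by
        have h1 : F (u / s) ≤ F T := hmono ht.le hT0 h.le
        have h2 : F 0 ≤ F (u / s) := hmono (le_refl (0:ℝ)) ht.le ht.le
        rw [abs_le]
        constructor
        · have := neg_abs_le (F 0)
          have := le_max_left |F 0| |F T|
          rw [hMdef]; linarith
        · have := le_abs_self (F T)
          have := le_max_right |F 0| |F T|
          rw [hMdef]; linarith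
      calc s ^ α / C * (Real.exp (-u) * |F (u / s)|)
          ≤ 1 / C * (Real.exp (-u) * M) := by gcongr
        _ = Real.exp (-u) * (M / C) := by ring
        _ ≤ bound u := by
            have : (0:ℝ) ≤ 2 / Real.Gamma (α + 1) * (Real.exp (-u) * u ^ α) := by positivity
            rw [hbd]; dsimp only; linarith
  -- integrability of the bound
  have hbint : Integrable bound (volume.restrict (Set.Ioi 0)) := by
    have h1 : IntegrableOn (fun u : ℝ => Real.exp (-u)) (Set.Ioi 0) := by
      have := exp_neg_integrableOn_Ioi 0 (one_pos (α := ℝ))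
      simpa using this
    have h2 : IntegrableOn (fun u : ℝ => Real.exp (-u) * u ^ α) (Set.Ioi 0) := by
      have := Real.GammaIntegral_convergent (by linarith : (0:ℝ) < α + 1)
      simpa using this
    exact (h1.mul_const (M / C)).add (h2.const_mul (2 / Real.Gamma (α + 1)))
  -- pointwise convergence
  have hlim : ∀ᵐ u ∂(volume.restrict (Set.Ioi 0)),
      Tendsto (fun s => G s u) (nhdsWithin (0:ℝ) (Set.Ioi 0)) (nhds (g u)) := by
    filter_upwards [ae_restrict_mem measurableSet_Ioi] with u hu
    have hu : (0:ℝ) < u := hu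
    have h1 : Tendsto (fun s : ℝ => u / s) (nhdsWithin (0:ℝ) (Set.Ioi 0)) atTop := by
      have := Tendsto.const_mul_atTop hu tendsto_inv_nhdsGT_zero
      simpa [div_eq_mul_inv] using this
    have h2 := hF.comp h1
    have h3 : Tendsto (fun s : ℝ =>
        g u * (F (u / s) / (C / Real.Gamma (α + 1) * (u / s) ^ α)))
        (nhdsWithin (0:ℝ) (Set.Ioi 0)) (nhds (g u)) := by
      have := tendsto_const_nhds (x := g u) (f := nhdsWithin (0:ℝ) (Set.Ioi 0)) |>.mul h2
      simpa using this
    refine h3.congr' ?_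
    filter_upwards [self_mem_nhdsWithin] with s hs
    have hs : (0:ℝ) < s := hs
    have ht : (0:ℝ) < u / s := div_pos hu hs
    have htα : (0:ℝ) < (u / s) ^ α := Real.rpow_pos_of_pos ht α
    have hst : s ^ α * (u / s) ^ α = u ^ α := by
      rw [← Real.mul_rpow hs.le ht.le]
      congr 1
      rw [mul_comm]
      exact div_mul_cancel₀ u (ne_of_gt hs)
    rw [hG, hg]
    dsimp only
    rw [← hst]
    field_simp
  have hDCT := MeasureTheory.tendsto_integral_filter_of_dominated_convergence
    bound hmeas hbound hbint hlim
  rw [hint_g] at hDCT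
  refine hDCT.congr' ?_
  filter_upwards [self_mem_nhdsWithin] with s hs
  exact (stepA s hs).symm
end

section
/- Let V = ℝ^{n+1} and let H_k ⊂ R[V]_k be the space of homogeneous harmonic polynomials of degree k. Then for all k ≥ 2, R[V]_k = H_k ⊕ r²·R[V]_{k-2}, where r² = x_0² + ⋯ + x_n². -/
open MvPolynomial

/-! ### The Fischer weight and bilinear form -/

noncomputable def wt {σ : Type*} (m : σ →₀ ℕ) : ℝ := m.prod fun _ k => (Nat.factorial k : ℝ)

lemma wt_pos {σ : Type*} (m : σ →₀ ℕ) : 0 < wt m := by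
  refine Finset.prod_pos fun i _ => ?_
  show (0:ℝ) < ((m i).factorial : ℝ)
  exact_mod_cast Nat.factorial_pos _

lemma wt_add_single {σ : Type*} [DecidableEq σ] (m : σ →₀ ℕ) (i : σ) :
    wt (m + Finsupp.single i 1) = (m i + 1) * wt m := by
  have h1 := Finsupp.mul_prod_erase' (m + Finsupp.single i 1) i
    (fun _ k => (Nat.factorial k : ℝ)) (fun _ => by simp)
  have h2 := Finsupp.mul_prod_erase' m i
    (fun _ k => (Nat.factorial k : ℝ)) (fun _ => by simp)
  have he : (m + Finsupp.single i 1).erase i = m.erase i := by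
    rw [Finsupp.erase_add, Finsupp.erase_single, add_zero]
  unfold wt
  rw [← h1, ← h2, he, Finsupp.add_apply, Finsupp.single_eq_same]
  show ((m i + 1).factorial : ℝ) * _ = (↑(m i) + 1) * (((m i).factorial : ℝ) * _)
  rw [Nat.factorial_succ]
  push_cast
  ring

noncomputable def fB {σ : Type*} (f g : MvPolynomial σ ℝ) : ℝ :=
  ∑ m ∈ f.support, coeff m f * coeff m g * wt m

lemma fB_eq_sum {σ : Type*} {f : MvPolynomial σ ℝ} (g : MvPolynomial σ ℝ)
    {s : Finset (σ →₀ ℕ)} (hs : f.support ⊆ s) :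
    fB f g = ∑ m ∈ s, coeff m f * coeff m g * wt m := by
  refine Finset.sum_subset hs fun m _ hm => ?_
  rw [MvPolynomial.notMem_support_iff.mp hm, zero_mul, zero_mul]

lemma fB_add_left {σ : Type*} (f g h : MvPolynomial σ ℝ) :
    fB (f + g) h = fB f h + fB g h := by
  classical
  rw [fB_eq_sum (f := f + g) h (s := f.support ∪ g.support)
      MvPolynomial.support_add,
    fB_eq_sum (f := f) h (Finset.subset_union_left),
    fB_eq_sum (f := g) h (Finset.subset_union_right), ← Finset.sum_add_distrib]
  refine Finset.sum_congr rfl fun m _ => ?_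
  rw [coeff_add]
  ring

lemma fB_zero_left {σ : Type*} (g : MvPolynomial σ ℝ) : fB 0 g = 0 := by
  simp [fB]

lemma fB_zero_right {σ : Type*} (f : MvPolynomial σ ℝ) : fB f 0 = 0 := by
  simp [fB]

lemma fB_add_right {σ : Type*} (f g h : MvPolynomial σ ℝ) :
    fB f (g + h) = fB f g + fB f h := by
  unfold fB
  rw [← Finset.sum_add_distrib]
  refine Finset.sum_congr rfl fun m _ => ?_
  rw [coeff_add]
  ring

lemma fB_sum_left {σ ι : Type*} (s : Finset ι) (f : ι → MvPolynomial σ ℝ)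
    (g : MvPolynomial σ ℝ) : fB (∑ i ∈ s, f i) g = ∑ i ∈ s, fB (f i) g := by
  induction s using Finset.cons_induction with
  | empty => simp [fB_zero_left]
  | cons a s ha ih => rw [Finset.sum_cons, Finset.sum_cons, fB_add_left, ih]

lemma fB_sum_right {σ ι : Type*} (s : Finset ι) (f : MvPolynomial σ ℝ)
    (g : ι → MvPolynomial σ ℝ) : fB f (∑ i ∈ s, g i) = ∑ i ∈ s, fB f (g i) := by
  induction s using Finset.cons_induction with
  | empty => simp [fB_zero_right]
  | cons a s ha ih => rw [Finset.sum_cons, Finset.sum_cons, fB_add_right, ih]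

lemma fB_monomial_left {σ : Type*} (s : σ →₀ ℕ) (a : ℝ) (g : MvPolynomial σ ℝ) :
    fB (monomial s a) g = a * coeff s g * wt s := by
  classical
  rcases eq_or_ne a 0 with rfl | ha
  · simp [fB]
  · unfold fB
    rw [MvPolynomial.support_monomial, if_neg ha, Finset.sum_singleton, coeff_monomial,
      if_pos rfl]

lemma coeff_pderiv' {σ : Type*} [DecidableEq σ] (i : σ) (g : MvPolynomial σ ℝ)
    (m : σ →₀ ℕ) :
    coeff m (pderiv i g) = (m i + 1) * coeff (m + Finsupp.single i 1) g := by
  induction g using MvPolynomial.induction_on' with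
  | add p q hp hq => rw [map_add, coeff_add, coeff_add, hp, hq, mul_add]
  | monomial t b =>
    rw [pderiv_monomial, coeff_monomial, coeff_monomial]
    rcases Nat.eq_zero_or_pos (t i) with h0 | hpos
    · have ht : t - Finsupp.single i 1 = t := by
        ext j
        rcases eq_or_ne j i with rfl | hj
        · simp [h0]
        · simp [Finsupp.single_apply, Ne.symm hj]
      rw [ht]
      have : t ≠ m + Finsupp.single i 1 := by
        intro h
        apply absurd h0
        rw [h]
        simp
      rw [if_neg this, mul_zero]
      split
      · next h => subst h; rw [h0]; norm_num
      · rfl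
    · have hiff : t - Finsupp.single i 1 = m ↔ t = m + Finsupp.single i 1 := by
        constructor
        · intro h
          rw [← h, tsub_add_cancel_of_le]
          rwa [Finsupp.single_le_iff]
        · intro h
          rw [h, add_tsub_cancel_right]
      by_cases hc : t = m + Finsupp.single i 1
      · rw [if_pos (hiff.mpr hc), if_pos hc, hc]
        simp only [Finsupp.add_apply, Finsupp.single_eq_same]
        push_cast
        ring
      · rw [if_neg (fun h => hc (hiff.mp h)), if_neg hc, mul_zero]

lemma fB_X_mul {σ : Type*} [DecidableEq σ] (i : σ) (p g : MvPolynomial σ ℝ) :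
    fB (X i * p) g = fB p (pderiv i g) := by
  induction p using MvPolynomial.induction_on' with
  | add p q hp hq => rw [mul_add, fB_add_left, fB_add_left, hp, hq]
  | monomial m a =>
    rw [show (X i : MvPolynomial σ ℝ) * monomial m a = monomial (m + Finsupp.single i 1) a by
        rw [X, monomial_mul, one_mul, add_comm],
      fB_monomial_left, fB_monomial_left, coeff_pderiv', wt_add_single]
    ring

lemma fB_self_pos {σ : Type*} {f : MvPolynomial σ ℝ} (hf : f ≠ 0) : 0 < fB f f := by
  refine Finset.sum_pos' (fun m _ => ?_) ?_
  · have := (wt_pos m).le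
    nlinarith [sq_nonneg (coeff m f)]
  · obtain ⟨m, hm⟩ := (MvPolynomial.support_nonempty).2 hf
    refine ⟨m, hm, ?_⟩
    have hc : coeff m f ≠ 0 := MvPolynomial.mem_support_iff.mp hm
    have := wt_pos m
    have h2 : 0 < coeff m f * coeff m f := mul_self_pos.mpr hc
    nlinarith

lemma isHomogeneous_pderiv {σ : Type*} [DecidableEq σ] {f : MvPolynomial σ ℝ} {k : ℕ}
    (hf : f.IsHomogeneous (k + 1)) (i : σ) : (pderiv i f).IsHomogeneous k := by
  intro d hd
  rw [coeff_pderiv'] at hd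
  have h2 : coeff (d + Finsupp.single i 1) f ≠ 0 := by
    intro h
    rw [h, mul_zero] at hd
    exact hd rfl
  have h3 := hf h2
  change (Finsupp.weight (fun _ : σ => (1:ℕ))) _ = _ at h3 ⊢
  rw [← Finsupp.degree_eq_weight_one] at h3 ⊢
  have hda : (d + Finsupp.single i 1).degree = d.degree + (Finsupp.single i 1).degree := by
    rw [Finsupp.degree_eq_weight_one]
    exact map_add _ _ _
  have hs1 : (Finsupp.single i 1).degree = 1 := by
    rw [Finsupp.degree_eq_weight_one, Finsupp.weight_apply, Finsupp.sum_single_index] <;> simp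
  rw [hda, hs1] at h3
  omega

/-! ### Facts about the Laplacian -/

noncomputable def polyLaplacian (n : ℕ) :
    MvPolynomial (Fin (n + 1)) ℝ →ₗ[ℝ] MvPolynomial (Fin (n + 1)) ℝ :=
  ∑ i, ((MvPolynomial.pderiv i).toLinearMap ∘ₗ (MvPolynomial.pderiv i).toLinearMap)

lemma polyLaplacian_apply (n : ℕ) (f : MvPolynomial (Fin (n + 1)) ℝ) :
    polyLaplacian n f = ∑ i, pderiv i (pderiv i f) := by
  simp [polyLaplacian]

/-- For `k ≥ 2`, the space of homogeneous polynomials of degree `k` on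
`ℝ^{n+1}` decomposes as the direct sum of the harmonic homogeneous
polynomials of degree `k` and `r²·R[V]_{k-2}`. -/
theorem harmonic_decomposition (n k : ℕ) (hk : 2 ≤ k) :
    MvPolynomial.homogeneousSubmodule (Fin (n + 1)) ℝ k =
        (MvPolynomial.homogeneousSubmodule (Fin (n + 1)) ℝ k ⊓
          LinearMap.ker (polyLaplacian n)) ⊔
        Submodule.map
          (LinearMap.mulLeft ℝ (∑ i, (MvPolynomial.X i) ^ 2))
          (MvPolynomial.homogeneousSubmodule (Fin (n + 1)) ℝ (k - 2)) ∧
      Disjoint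
        (MvPolynomial.homogeneousSubmodule (Fin (n + 1)) ℝ k ⊓
          LinearMap.ker (polyLaplacian n))
        (Submodule.map
          (LinearMap.mulLeft ℝ (∑ i, (MvPolynomial.X i) ^ 2))
          (MvPolynomial.homogeneousSubmodule (Fin (n + 1)) ℝ (k - 2))) := by
  classical
  obtain ⟨k', rfl⟩ : ∃ k', k = k' + 2 := ⟨k - 2, by omega⟩
  have hk2 : k' + 2 - 2 = k' := by omega
  rw [hk2]
  set r2 : MvPolynomial (Fin (n + 1)) ℝ := ∑ i, (MvPolynomial.X i) ^ 2 with hr2def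
  set Pk := MvPolynomial.homogeneousSubmodule (Fin (n + 1)) ℝ (k' + 2) with hPk
  set Pk2 := MvPolynomial.homogeneousSubmodule (Fin (n + 1)) ℝ k' with hPk2
  set H := Pk ⊓ LinearMap.ker (polyLaplacian n) with hH
  set W := Submodule.map (LinearMap.mulLeft ℝ r2) Pk2 with hW
  -- r2 is homogeneous of degree 2 and nonzero
  have hr2hom : r2.IsHomogeneous 2 := by
    refine MvPolynomial.IsHomogeneous.sum _ _ _ fun i _ => ?_
    rw [pow_two]
    exact (isHomogeneous_X ℝ i).mul (isHomogeneous_X ℝ i)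
  have hr2ne : r2 ≠ 0 := by
    intro h
    have h1 : eval (fun _ => (1:ℝ)) r2 = n + 1 := by
      rw [hr2def]
      simp
    rw [h, map_zero] at h1
    have : (0:ℝ) < n + 1 := by positivity
    rw [← h1] at this
    exact lt_irrefl _ this
  -- multiplication by r2 is injective
  have hMinj : Function.Injective (LinearMap.mulLeft ℝ r2) := by
    intro a b hab
    simp only [LinearMap.mulLeft_apply] at hab
    exact mul_left_cancel₀ hr2ne hab
  -- the Laplacian maps Pk into Pk2
  have hΔmem : ∀ f ∈ Pk, polyLaplacian n f ∈ Pk2 := by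
    intro f hf
    rw [polyLaplacian_apply]
    refine Submodule.sum_mem _ fun i _ => ?_
    rw [hPk2, mem_homogeneousSubmodule]
    exact isHomogeneous_pderiv (isHomogeneous_pderiv (k := k' + 1)
      (mem_homogeneousSubmodule _ _ |>.mp hf) i) i
  -- multiplication by r2 maps Pk2 into Pk
  have hMmem : ∀ q ∈ Pk2, (LinearMap.mulLeft ℝ r2) q ∈ Pk := by
    intro q hq
    rw [LinearMap.mulLeft_apply, hPk, mem_homogeneousSubmodule]
    have h := hr2hom.mul (mem_homogeneousSubmodule _ _ |>.mp hq)
    have he : 2 + k' = k' + 2 := Nat.add_comm 2 k'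
    exact he ▸ h
  -- disjointness via the Fischer form
  have hDisj : Disjoint H W := by
    rw [Submodule.disjoint_def]
    intro f hfH hfW
    obtain ⟨q, hq, rfl⟩ := hfW
    rw [LinearMap.mulLeft_apply] at hfH ⊢
    have hker : polyLaplacian n (r2 * q) = 0 := LinearMap.mem_ker.mp hfH.2
    by_contra hne
    have hpos := fB_self_pos hne
    have key : ∀ f, fB (r2 * q) f = fB q (polyLaplacian n f) := by
      intro f
      rw [hr2def, Finset.sum_mul, fB_sum_left, polyLaplacian_apply, fB_sum_right]
      exact Finset.sum_congr rfl fun i _ => by rw [pow_two, mul_assoc, fB_X_mul, fB_X_mul]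
    have hzero : fB (r2 * q) (r2 * q) = 0 := by
      rw [key, hker, fB_zero_right]
    rw [hzero] at hpos
    exact lt_irrefl _ hpos
  refine ⟨?_, hDisj⟩
  -- finite dimensionality
  have hfd : ∀ m : ℕ, FiniteDimensional ℝ
      ↥(MvPolynomial.homogeneousSubmodule (Fin (n + 1)) ℝ m) := by
    intro m
    refine Submodule.finiteDimensional_of_le
      (S₂ := MvPolynomial.restrictTotalDegree (Fin (n + 1)) ℝ m) ?_
    intro f hf
    rw [MvPolynomial.mem_restrictTotalDegree]
    exact (mem_homogeneousSubmodule _ _ |>.mp hf).totalDegree_le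
  haveI : FiniteDimensional ℝ ↥Pk := hfd _
  haveI : FiniteDimensional ℝ ↥Pk2 := hfd _
  have hWle : W ≤ Pk := by
    rintro x ⟨q, hq, rfl⟩
    exact hMmem q hq
  have hHle : H ≤ Pk := inf_le_left
  haveI : FiniteDimensional ℝ ↥H := Submodule.finiteDimensional_of_le hHle
  haveI : FiniteDimensional ℝ ↥W := Submodule.finiteDimensional_of_le hWle
  -- restricted maps
  set Δ' : ↥Pk →ₗ[ℝ] ↥Pk2 := (polyLaplacian n).restrict hΔmem with hΔ'
  set M' : ↥Pk2 →ₗ[ℝ] ↥Pk := (LinearMap.mulLeft ℝ r2).restrict hMmem with hM'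
  -- Δ' ∘ M' is injective hence surjective
  have hTinj : Function.Injective (Δ'.comp M') := by
    rw [← LinearMap.ker_eq_bot, LinearMap.ker_eq_bot']
    intro q hq0
    have hval : polyLaplacian n (r2 * (q : MvPolynomial (Fin (n + 1)) ℝ)) = 0 := by
      have := congrArg (Subtype.val) hq0
      simpa [hΔ', hM', LinearMap.restrict_apply] using this
    have hmemW : r2 * (q : MvPolynomial (Fin (n + 1)) ℝ) ∈ W :=
      ⟨q, q.2, rfl⟩
    have hmemH : r2 * (q : MvPolynomial (Fin (n + 1)) ℝ) ∈ H := by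
      refine ⟨?_, LinearMap.mem_ker.mpr hval⟩
      have := hMmem q q.2
      rwa [LinearMap.mulLeft_apply] at this
    have hz : r2 * (q : MvPolynomial (Fin (n + 1)) ℝ) = 0 :=
      Submodule.disjoint_def.mp hDisj _ hmemH hmemW
    have : (q : MvPolynomial (Fin (n + 1)) ℝ) = 0 := by
      rcases mul_eq_zero.mp hz with h | h
      · exact absurd h hr2ne
      · exact h
    exact Subtype.ext this
  have hTsurj : Function.Surjective (Δ'.comp M') :=
    LinearMap.injective_iff_surjective.mp hTinj
  have hΔ'surj : Function.Surjective Δ' := by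
    rw [LinearMap.coe_comp] at hTsurj
    exact hTsurj.of_comp
  -- rank computations
  have hrank1 : Module.finrank ℝ ↥Pk
      = Module.finrank ℝ ↥(LinearMap.ker Δ') + Module.finrank ℝ ↥Pk2 := by
    have := LinearMap.finrank_range_add_finrank_ker Δ'
    rw [LinearMap.range_eq_top.mpr hΔ'surj, finrank_top] at this
    omega
  have hHeq : H = Submodule.map Pk.subtype (LinearMap.ker Δ') := by
    ext x
    constructor
    · intro hx
      have hx0 : Δ' ⟨x, hx.1⟩ = 0 := Subtype.ext (by
        have : polyLaplacian n x = 0 := LinearMap.mem_ker.mp hx.2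
        simpa [hΔ', LinearMap.restrict_apply] using this)
      exact ⟨⟨x, hx.1⟩, LinearMap.mem_ker.mpr hx0, rfl⟩
    · rintro ⟨⟨y, hy⟩, hyk, rfl⟩
      refine ⟨hy, LinearMap.mem_ker.mpr ?_⟩
      have := congrArg Subtype.val (LinearMap.mem_ker.mp hyk)
      simpa [hΔ', LinearMap.restrict_apply] using this
  have hrankH : Module.finrank ℝ ↥H = Module.finrank ℝ ↥(LinearMap.ker Δ') := by
    rw [hHeq, Submodule.finrank_map_subtype_eq]
  have hrankW : Module.finrank ℝ ↥W = Module.finrank ℝ ↥Pk2 :=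
    (Submodule.equivMapOfInjective (LinearMap.mulLeft ℝ r2) hMinj Pk2).finrank_eq.symm
  have hranksup : Module.finrank ℝ ↥(H ⊔ W) = Module.finrank ℝ ↥Pk := by
    have h1 := Submodule.finrank_sup_add_finrank_inf_eq H W
    rw [hDisj.eq_bot, finrank_bot, add_zero] at h1
    rw [h1, hrankH, hrankW, hrank1]
  exact (Submodule.eq_of_le_of_finrank_eq (sup_le hHle hWle) hranksup).symm
end

section
/- Let A ⊂ R[x_0,…,x_n] be a graded subalgebra containing r² = Σ x_i² and closed under the Laplacian Δ. Then for each k ≥ 2, A_k = (A ∩ H_k) ⊕ r²·A_{k-2}, where H_k is the space of harmonic homogeneous polynomials of degree k. Consequently, if H(z) = Σ dim(A_k) z^k and G(z) = Σ dim(A ∩ H_k) z^k, then G(z) = (1 - z²)·H(z). -/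
open MvPolynomial PowerSeries

namespace HarmonicAux

noncomputable section

abbrev PP (n : ℕ) := MvPolynomial (Fin (n + 1)) ℝ

variable (n : ℕ)

lemma polyLaplacian_apply (p : PP n) :
    polyLaplacian n p = ∑ i, pderiv i (pderiv i p) := by
  simp [polyLaplacian]

/-- The weight `α! = ∏ i (α i)!` used in the Fischer inner product. -/
def w (α : Fin (n + 1) →₀ ℕ) : ℝ := ∏ i, (Nat.factorial (α i) : ℝ)

lemma w_pos (α : Fin (n + 1) →₀ ℕ) : 0 < w n α :=
  Finset.prod_pos fun i _ => by exact_mod_cast (α i).factorial_pos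

lemma w_add_single (α : Fin (n + 1) →₀ ℕ) (i : Fin (n + 1)) :
    w n (α + Finsupp.single i 1) = ((α i : ℝ) + 1) * w n α := by
  unfold w
  rw [← Finset.mul_prod_erase _ _ (Finset.mem_univ i),
    ← Finset.mul_prod_erase _ (fun j => ((α j).factorial : ℝ)) (Finset.mem_univ i)]
  have h1 : ∀ j ∈ Finset.univ.erase i,
      (Nat.factorial ((α + Finsupp.single i 1 : Fin (n + 1) →₀ ℕ) j) : ℝ)
        = (Nat.factorial (α j) : ℝ) := by
    intro j hj
    have hji : j ≠ i := (Finset.mem_erase.mp hj).1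
    rw [Finsupp.add_apply, Finsupp.single_apply, if_neg (fun e => hji e.symm), add_zero]
  rw [Finset.prod_congr rfl h1]
  have h2 : (α + Finsupp.single i 1 : Fin (n + 1) →₀ ℕ) i = α i + 1 := by
    rw [Finsupp.add_apply, Finsupp.single_eq_same]
  rw [h2, Nat.factorial_succ]
  push_cast
  ring

/-- The Fischer bilinear form on polynomials. -/
def fischer : PP n →ₗ[ℝ] PP n →ₗ[ℝ] ℝ :=
  (MvPolynomial.basisMonomials (Fin (n + 1)) ℝ).constr ℝ
    fun α => w n α • MvPolynomial.lcoeff ℝ α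

lemma fischer_monomial_apply (α : Fin (n + 1) →₀ ℕ) (a : ℝ) (q : PP n) :
    fischer n (monomial α a) q = a * (w n α * coeff α q) := by
  have h : (monomial α a : PP n) = a • (MvPolynomial.basisMonomials (Fin (n + 1)) ℝ α) := by
    rw [coe_basisMonomials]
    rw [smul_monomial, smul_eq_mul, mul_one]
  rw [h, map_smul, LinearMap.smul_apply]
  unfold fischer
  rw [Module.Basis.constr_basis]
  simp [LinearMap.smul_apply, smul_eq_mul, MvPolynomial.lcoeff_apply, mul_assoc]

lemma fischer_monomial_monomial (α β : Fin (n + 1) →₀ ℕ) (a b : ℝ) :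
    fischer n (monomial α a) (monomial β b) = if β = α then w n α * (a * b) else 0 := by
  classical
  rw [fischer_monomial_apply, MvPolynomial.coeff_monomial]
  split_ifs with h
  · ring
  · simp

lemma fischer_X_mul (i : Fin (n + 1)) (p q : PP n) :
    fischer n (MvPolynomial.X i * p) q = fischer n p (pderiv i q) := by
  classical
  induction p using MvPolynomial.induction_on' with
  | add p1 p2 hp1 hp2 =>
    simp only [mul_add, map_add, LinearMap.add_apply, hp1, hp2]
  | monomial α a =>
    induction q using MvPolynomial.induction_on' with
    | add q1 q2 h1 h2 =>
      simp only [map_add, h1, h2]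
    | monomial β b =>
      rw [show (MvPolynomial.X i * monomial α a : PP n)
            = MvPolynomial.monomial (α + Finsupp.single i 1) a by
        rw [show (MvPolynomial.X i : PP n) = monomial (Finsupp.single i 1) 1 from rfl,
          monomial_mul, one_mul]
        exact congrArg (fun s => (MvPolynomial.monomial s : ℝ →ₗ[ℝ] PP n) a) (add_comm _ _)]
      rw [pderiv_monomial, fischer_monomial_monomial, fischer_monomial_monomial]
      by_cases h : β = α + Finsupp.single i 1
      · subst h
        rw [if_pos rfl, if_pos (add_tsub_cancel_right α (Finsupp.single i 1)),
          w_add_single]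
        have h2 : (α + Finsupp.single i 1 : Fin (n + 1) →₀ ℕ) i = α i + 1 := by
          rw [Finsupp.add_apply, Finsupp.single_eq_same]
        rw [h2]
        push_cast
        ring
      · rw [if_neg h]
        by_cases h2 : β - Finsupp.single i 1 = α
        · rw [if_pos h2]
          have hβ : β i = 0 := by
            by_contra hβ
            apply h
            rw [← h2, tsub_add_cancel_of_le
              (Finsupp.single_le_iff.mpr (Nat.one_le_iff_ne_zero.mpr hβ))]
          rw [hβ]
          simp
        · rw [if_neg h2]

lemma fischer_r2_mul (q p : PP n) :
    fischer n ((∑ i, MvPolynomial.X i ^ 2) * q) p = fischer n q (polyLaplacian n p) := by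
  rw [Finset.sum_mul, map_sum, LinearMap.sum_apply, polyLaplacian_apply, map_sum]
  refine Finset.sum_congr rfl fun i _ => ?_
  rw [show (MvPolynomial.X i ^ 2 * q : PP n) = MvPolynomial.X i * (MvPolynomial.X i * q) by ring, fischer_X_mul, fischer_X_mul]

lemma fischer_self_eq_zero {p : PP n} (h : fischer n p p = 0) : p = 0 := by
  have expand : ∀ q : PP n,
      fischer n p q = ∑ α ∈ p.support, w n α * (coeff α p * coeff α q) := by
    intro q
    conv_lhs => rw [p.as_sum]
    rw [map_sum]
    simp only [LinearMap.coe_sum, Finset.sum_apply]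
    refine Finset.sum_congr rfl fun α _ => ?_
    rw [fischer_monomial_apply]
    ring
  rw [expand p] at h
  have hz := (Finset.sum_eq_zero_iff_of_nonneg
    (fun α _ => mul_nonneg (w_pos n α).le (mul_self_nonneg _))).mp h
  apply MvPolynomial.ext
  intro d
  rw [coeff_zero]
  by_cases hd : d ∈ p.support
  · have h0 := hz d hd
    rcases mul_eq_zero.mp h0 with h1 | h1
    · exact absurd h1 (ne_of_gt (w_pos n d))
    · exact mul_self_eq_zero.mp h1
  · exact MvPolynomial.notMem_support_iff.mp hd

lemma degree_univ (d : Fin (n + 1) →₀ ℕ) : Finsupp.degree d = ∑ j, d j :=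
  calc Finsupp.degree d = ∑ i ∈ d.support, d i := rfl
  _ = ∑ j, d j := Finset.sum_subset (Finset.subset_univ _)
    (fun x _ hx => Finsupp.notMem_support_iff.mp hx)

lemma degree_sub_single {d : Fin (n + 1) →₀ ℕ} {i : Fin (n + 1)} (h : d i ≠ 0) :
    Finsupp.degree (d - Finsupp.single i 1) = Finsupp.degree d - 1 := by
  classical
  rw [degree_univ, degree_univ]
  rw [← Finset.add_sum_erase _ _ (Finset.mem_univ i),
    ← Finset.add_sum_erase _ d (Finset.mem_univ i)]
  have h1 : ∀ j ∈ Finset.univ.erase i,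
      (d - Finsupp.single i 1 : Fin (n + 1) →₀ ℕ) j = d j := by
    intro j hj
    have hji : j ≠ i := (Finset.mem_erase.mp hj).1
    rw [Finsupp.tsub_apply, Finsupp.single_apply, if_neg (fun e => hji e.symm), Nat.sub_zero]
  rw [Finset.sum_congr rfl h1, Finsupp.tsub_apply, Finsupp.single_eq_same]
  exact (Nat.sub_add_comm (Nat.one_le_iff_ne_zero.mpr h)).symm

lemma isHom_pderiv {p : PP n} {k : ℕ} (h : p.IsHomogeneous k) (i : Fin (n + 1)) :
    (pderiv i p).IsHomogeneous (k - 1) := by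
  classical
  have hrw : pderiv i p
      = ∑ d ∈ p.support, MvPolynomial.monomial (d - Finsupp.single i 1) (coeff d p * (d i : ℝ)) := by
    conv_lhs => rw [p.as_sum]
    rw [map_sum]
    exact Finset.sum_congr rfl fun d _ => pderiv_monomial
  rw [hrw, ← mem_homogeneousSubmodule]
  apply Submodule.sum_mem
  intro d hd
  by_cases hdi : d i = 0
  · rw [hdi]
    simp only [Nat.cast_zero, mul_zero, map_zero]
    exact Submodule.zero_mem _
  · rw [mem_homogeneousSubmodule]
    apply isHomogeneous_monomial
    have hdeg : Finsupp.degree d = k := by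
      by_contra hne
      exact (MvPolynomial.mem_support_iff.mp hd) (h.coeff_eq_zero hne)
    rw [degree_sub_single n hdi, hdeg]

lemma laplacian_isHom {p : PP n} {k : ℕ} (h : p.IsHomogeneous k) :
    (polyLaplacian n p).IsHomogeneous (k - 2) := by
  rw [polyLaplacian_apply, ← mem_homogeneousSubmodule]
  apply Submodule.sum_mem
  intro i _
  rw [mem_homogeneousSubmodule, show k - 2 = k - 1 - 1 by omega]
  exact isHom_pderiv n (isHom_pderiv n h i) i

lemma pderiv_of_isHom_zero {p : PP n} (h : p.IsHomogeneous 0) (i : Fin (n + 1)) :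
    pderiv i p = 0 := by
  apply pderiv_eq_zero_of_notMem_vars
  intro hmem
  obtain ⟨d, hd, hid⟩ := (mem_vars i).mp hmem
  have h0 : p.totalDegree = 0 := Nat.le_zero.mp h.totalDegree_le
  exact (Finsupp.mem_support_iff.mp hid) ((totalDegree_eq_zero_iff _ p).mp h0 d hd i)

lemma laplacian_eq_zero_of_le_one {p : PP n} {k : ℕ} (h : p.IsHomogeneous k) (hk : k ≤ 1) :
    polyLaplacian n p = 0 := by
  rw [polyLaplacian_apply]
  apply Finset.sum_eq_zero
  intro i _
  have h1 : (pderiv i p).IsHomogeneous 0 := by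
    have h2 := isHom_pderiv n h i
    rwa [show k - 1 = 0 by omega] at h2
  exact pderiv_of_isHom_zero n h1 i

open Module in
/-- Abstract duality lemma: if `B` and `M` are mutually adjoint with respect to
positive-definite bilinear forms, then `ker B ⊔ range M = ⊤`. -/
lemma key {W W' : Type} [AddCommGroup W] [Module ℝ W] [AddCommGroup W'] [Module ℝ W']
    [FiniteDimensional ℝ W] [FiniteDimensional ℝ W']
    (Φ : W →ₗ[ℝ] Module.Dual ℝ W) (Φ' : W' →ₗ[ℝ] Module.Dual ℝ W')
    (hΦ : ∀ x, Φ x x = 0 → x = 0) (hΦ' : ∀ y, Φ' y y = 0 → y = 0)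
    (B : W →ₗ[ℝ] W') (M : W' →ₗ[ℝ] W)
    (adj : ∀ q p, Φ (M q) p = Φ' q (B p)) :
    LinearMap.ker B ⊔ LinearMap.range M = ⊤ := by
  have hΦinj : Function.Injective Φ := by
    intro x y hxy
    have h2 : Φ (x - y) = 0 := by rw [map_sub, hxy, sub_self]
    have h1 : Φ (x - y) (x - y) = 0 := by rw [h2]; rfl
    have := hΦ _ h1
    rwa [sub_eq_zero] at this
  have hΦ'inj : Function.Injective Φ' := by
    intro x y hxy
    have h2 : Φ' (x - y) = 0 := by rw [map_sub, hxy, sub_self]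
    have h1 : Φ' (x - y) (x - y) = 0 := by rw [h2]; rfl
    have := hΦ' _ h1
    rwa [sub_eq_zero] at this
  have hsurj : LinearMap.range Φ' = ⊤ := by
    apply Submodule.eq_top_of_finrank_eq
    rw [LinearMap.finrank_range_of_inj hΦ'inj, Subspace.dual_finrank_eq]
  have hcomp : Φ.comp M = B.dualMap.comp Φ' := by
    apply LinearMap.ext
    intro q
    apply LinearMap.ext
    intro p
    rw [LinearMap.comp_apply, LinearMap.comp_apply, LinearMap.dualMap_apply, adj]
  have hrank : finrank ℝ ↥(LinearMap.range M) = finrank ℝ ↥(LinearMap.range B) := by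
    have e1 : finrank ℝ ↥(LinearMap.range (Φ.comp M)) = finrank ℝ ↥(LinearMap.range M) := by
      rw [LinearMap.range_comp]
      exact (((LinearMap.range M).equivMapOfInjective Φ hΦinj).finrank_eq).symm
    have e2 : LinearMap.range (B.dualMap.comp Φ') = LinearMap.range B.dualMap := by
      rw [LinearMap.range_comp, hsurj, Submodule.map_top]
    rw [← e1, hcomp, e2, LinearMap.finrank_range_dualMap_eq_finrank_range]
  have hdisj : Disjoint (LinearMap.ker B) (LinearMap.range M) := by
    rw [Submodule.disjoint_def]
    intro x hx1 hx2
    obtain ⟨q, rfl⟩ := LinearMap.mem_range.mp hx2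
    apply hΦ
    rw [adj, LinearMap.mem_ker.mp hx1, map_zero]
  apply Submodule.eq_top_of_disjoint _ _ _ hdisj
  rw [hrank]
  rw [add_comm]
  exact (LinearMap.finrank_range_add_finrank_ker B).ge

lemma fd_of_le_homog {k : ℕ} {S : Submodule ℝ (PP n)}
    (hS : S ≤ homogeneousSubmodule (Fin (n + 1)) ℝ k) : FiniteDimensional ℝ ↥S := by
  have hle : S ≤ MvPolynomial.restrictTotalDegree (Fin (n + 1)) ℝ k := fun p hp =>
    (MvPolynomial.mem_restrictTotalDegree _ k p).mpr
      ((mem_homogeneousSubmodule _ _).mp (hS hp)).totalDegree_le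
  exact Submodule.finiteDimensional_of_le hle

lemma r2_isHom : (∑ i, MvPolynomial.X i ^ 2 : PP n).IsHomogeneous 2 :=
  IsHomogeneous.sum _ _ _ fun i _ => isHomogeneous_X_pow i 2

lemma r2_ne_zero : (∑ i, MvPolynomial.X i ^ 2 : PP n) ≠ 0 := by
  intro h
  have h2 := congrArg (MvPolynomial.eval (fun _ => (1 : ℝ))) h
  simp at h2
  have hcast : (0 : ℝ) ≤ (n : ℝ) := Nat.cast_nonneg n
  linarith

/-- Key decomposition step: `N₁ ≤ (N₁ ⊓ ker Δ) ⊔ r²·N₂` given adjointness. -/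
lemma sup_top (N1 N2 : Submodule ℝ (PP n)) [FiniteDimensional ℝ N1] [FiniteDimensional ℝ N2]
    (hB : ∀ p ∈ N1, polyLaplacian n p ∈ N2)
    (hM : ∀ p ∈ N2, (LinearMap.mulLeft ℝ (∑ i, MvPolynomial.X i ^ 2 : PP n)) p ∈ N1) :
    N1 ≤ (N1 ⊓ LinearMap.ker (polyLaplacian n)) ⊔
      Submodule.map (LinearMap.mulLeft ℝ (∑ i, MvPolynomial.X i ^ 2 : PP n)) N2 := by
  set B : N1 →ₗ[ℝ] N2 := (polyLaplacian n).restrict hB with hBdef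
  set M : N2 →ₗ[ℝ] N1 := (LinearMap.mulLeft ℝ (∑ i, MvPolynomial.X i ^ 2 : PP n)).restrict hM with hMdef
  set Φ : N1 →ₗ[ℝ] Module.Dual ℝ N1 := ((fischer n).comp N1.subtype).compl₂ N1.subtype with hΦdef
  set Φ' : N2 →ₗ[ℝ] Module.Dual ℝ N2 :=
    ((fischer n).comp N2.subtype).compl₂ N2.subtype with hΦ'def
  have hΦapp : ∀ x y : N1, Φ x y = fischer n (x : PP n) (y : PP n) := fun x y => rfl
  have hΦ'app : ∀ x y : N2, Φ' x y = fischer n (x : PP n) (y : PP n) := fun x y => rfl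
  have hpos : ∀ x : N1, Φ x x = 0 → x = 0 := by
    intro x hx
    exact Subtype.ext (fischer_self_eq_zero n ((hΦapp x x) ▸ hx))
  have hpos' : ∀ x : N2, Φ' x x = 0 → x = 0 := by
    intro x hx
    exact Subtype.ext (fischer_self_eq_zero n ((hΦ'app x x) ▸ hx))
  have hadj : ∀ (q : N2) (p : N1), Φ (M q) p = Φ' q (B p) := by
    intro q p
    rw [hΦapp, hΦ'app]
    have h1 : ((M q : N1) : PP n) = (∑ i, MvPolynomial.X i ^ 2 : PP n) * (q : PP n) := by
      rw [hMdef, LinearMap.restrict_apply]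
      rfl
    have h2 : ((B p : N2) : PP n) = polyLaplacian n (p : PP n) := by
      rw [hBdef, LinearMap.restrict_apply]
    rw [h1, h2, fischer_r2_mul]
  have htop := key Φ Φ' hpos hpos' B M hadj
  intro p hp
  have hmem : (⟨p, hp⟩ : N1) ∈ (⊤ : Submodule ℝ N1) := Submodule.mem_top
  rw [← htop] at hmem
  obtain ⟨y, hy, z, hz, hyz⟩ := Submodule.mem_sup.mp hmem
  have hsum : (y : PP n) + (z : PP n) = p := by
    have h3 := congrArg (Subtype.val) hyz
    simpa using h3
  apply Submodule.mem_sup.mpr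
  refine ⟨(y : PP n), ⟨y.2, ?_⟩, (z : PP n), ?_, hsum⟩
  · have hy0 : polyLaplacian n (y : PP n) = 0 := by
      have hcoe : ((B y : N2) : PP n) = polyLaplacian n (y : PP n) := by
        rw [hBdef, LinearMap.restrict_apply]
      rw [← hcoe, LinearMap.mem_ker.mp hy, ZeroMemClass.coe_zero]
    exact LinearMap.mem_ker.mpr hy0
  · obtain ⟨q, hq⟩ := LinearMap.mem_range.mp hz
    refine ⟨(q : PP n), q.2, ?_⟩
    have hcoe : ((M q : N1) : PP n)
        = (LinearMap.mulLeft ℝ (∑ i, MvPolynomial.X i ^ 2 : PP n)) (q : PP n) := by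
      rw [hMdef, LinearMap.restrict_apply]
    rw [← hcoe, hq]

end

end HarmonicAux

open HarmonicAux Module in
/-- For a graded subalgebra `A ⊆ ℝ[x_0,…,x_n]` containing `r²` and closed
under `Δ`: for `k ≥ 2`, `A_k = (A ∩ H_k) ⊕ r²·A_{k-2}`, and consequently the
generating series satisfy `G(z) = (1 - z²)·H(z)`. -/
theorem laplacian_algebra_harmonic_decomposition (n : ℕ)
    (A : Subalgebra ℝ (MvPolynomial (Fin (n + 1)) ℝ))
    (hgraded : ∀ p ∈ A, ∀ k, MvPolynomial.homogeneousComponent k p ∈ A)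
    (hr2 : (∑ i, (MvPolynomial.X i) ^ 2 : MvPolynomial (Fin (n + 1)) ℝ) ∈ A)
    (hΔ : ∀ p ∈ A, polyLaplacian n p ∈ A) :
    (∀ k : ℕ, 2 ≤ k →
        (A.toSubmodule ⊓ MvPolynomial.homogeneousSubmodule (Fin (n + 1)) ℝ k =
          (A.toSubmodule ⊓ MvPolynomial.homogeneousSubmodule (Fin (n + 1)) ℝ k ⊓
            LinearMap.ker (polyLaplacian n)) ⊔
          Submodule.map (LinearMap.mulLeft ℝ (∑ i, (MvPolynomial.X i) ^ 2))
            (A.toSubmodule ⊓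
              MvPolynomial.homogeneousSubmodule (Fin (n + 1)) ℝ (k - 2))) ∧
        Disjoint
          (A.toSubmodule ⊓ MvPolynomial.homogeneousSubmodule (Fin (n + 1)) ℝ k ⊓
            LinearMap.ker (polyLaplacian n))
          (Submodule.map (LinearMap.mulLeft ℝ (∑ i, (MvPolynomial.X i) ^ 2))
            (A.toSubmodule ⊓
              MvPolynomial.homogeneousSubmodule (Fin (n + 1)) ℝ (k - 2)))) ∧
      PowerSeries.mk (fun k =>
          (Module.finrank ℝ
            ↥(A.toSubmodule ⊓ MvPolynomial.homogeneousSubmodule (Fin (n + 1)) ℝ k ⊓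
              LinearMap.ker (polyLaplacian n)) : ℝ)) =
        (1 - (PowerSeries.X : PowerSeries ℝ) ^ 2) *
          PowerSeries.mk (fun k =>
            (Module.finrank ℝ
              ↥(A.toSubmodule ⊓
                MvPolynomial.homogeneousSubmodule (Fin (n + 1)) ℝ k) : ℝ)) := by
  classical
  have hNfd : ∀ k, FiniteDimensional ℝ
      ↥(A.toSubmodule ⊓ MvPolynomial.homogeneousSubmodule (Fin (n + 1)) ℝ k) :=
    fun k => fd_of_le_homog n inf_le_right
  have hBmem : ∀ k, ∀ p ∈ A.toSubmodule ⊓ MvPolynomial.homogeneousSubmodule (Fin (n + 1)) ℝ k,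
      polyLaplacian n p ∈
        A.toSubmodule ⊓ MvPolynomial.homogeneousSubmodule (Fin (n + 1)) ℝ (k - 2) :=
    fun k p hp => ⟨hΔ p hp.1, laplacian_isHom n hp.2⟩
  have hMmem : ∀ k, 2 ≤ k →
      ∀ p ∈ A.toSubmodule ⊓ MvPolynomial.homogeneousSubmodule (Fin (n + 1)) ℝ (k - 2),
      (LinearMap.mulLeft ℝ (∑ i, (MvPolynomial.X i) ^ 2)) p ∈
        A.toSubmodule ⊓ MvPolynomial.homogeneousSubmodule (Fin (n + 1)) ℝ k := by
    intro k hk p hp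
    rw [LinearMap.mulLeft_apply]
    refine ⟨A.mul_mem hr2 hp.1, ?_⟩
    have h1 := (r2_isHom n).mul hp.2
    rwa [show 2 + (k - 2) = k by omega] at h1
  -- Disjointness for all k ≥ 2
  have hdisj : ∀ k : ℕ, 2 ≤ k → Disjoint
      (A.toSubmodule ⊓ MvPolynomial.homogeneousSubmodule (Fin (n + 1)) ℝ k ⊓
        LinearMap.ker (polyLaplacian n))
      (Submodule.map (LinearMap.mulLeft ℝ (∑ i, (MvPolynomial.X i) ^ 2))
        (A.toSubmodule ⊓ MvPolynomial.homogeneousSubmodule (Fin (n + 1)) ℝ (k - 2))) := by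
    intro k hk
    rw [Submodule.disjoint_def]
    intro x hx1 hx2
    obtain ⟨q, hq, rfl⟩ := hx2
    apply fischer_self_eq_zero n
    have hker : polyLaplacian n
        ((LinearMap.mulLeft ℝ (∑ i, (MvPolynomial.X i) ^ 2)) q) = 0 :=
      LinearMap.mem_ker.mp hx1.2
    rw [LinearMap.mulLeft_apply] at hker
    rw [LinearMap.mulLeft_apply, fischer_r2_mul, hker, map_zero]
  -- The decomposition for all k ≥ 2
  have hdecomp : ∀ k : ℕ, 2 ≤ k →
      A.toSubmodule ⊓ MvPolynomial.homogeneousSubmodule (Fin (n + 1)) ℝ k =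
        (A.toSubmodule ⊓ MvPolynomial.homogeneousSubmodule (Fin (n + 1)) ℝ k ⊓
          LinearMap.ker (polyLaplacian n)) ⊔
        Submodule.map (LinearMap.mulLeft ℝ (∑ i, (MvPolynomial.X i) ^ 2))
          (A.toSubmodule ⊓ MvPolynomial.homogeneousSubmodule (Fin (n + 1)) ℝ (k - 2)) := by
    intro k hk
    haveI := hNfd k
    haveI := hNfd (k - 2)
    apply le_antisymm
    · exact sup_top n _ _ (hBmem k) (hMmem k hk)
    · apply sup_le inf_le_left
      rw [Submodule.map_le_iff_le_comap]
      intro p hp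
      exact hMmem k hk p hp
  refine ⟨fun k hk => ⟨hdecomp k hk, hdisj k hk⟩, ?_⟩
  -- Counting
  have hinj : Function.Injective (LinearMap.mulLeft ℝ (∑ i, (MvPolynomial.X i) ^ 2 :
      MvPolynomial (Fin (n + 1)) ℝ)) := by
    intro a b hab
    simp only [LinearMap.mulLeft_apply] at hab
    exact mul_left_cancel₀ (r2_ne_zero n) hab
  have hcount : ∀ k : ℕ, 2 ≤ k →
      finrank ℝ ↥(A.toSubmodule ⊓ MvPolynomial.homogeneousSubmodule (Fin (n + 1)) ℝ k) =
      finrank ℝ ↥(A.toSubmodule ⊓ MvPolynomial.homogeneousSubmodule (Fin (n + 1)) ℝ k ⊓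
        LinearMap.ker (polyLaplacian n)) +
      finrank ℝ ↥(A.toSubmodule ⊓ MvPolynomial.homogeneousSubmodule (Fin (n + 1)) ℝ (k - 2)) := by
    intro k hk
    haveI := hNfd k
    haveI := hNfd (k - 2)
    haveI : FiniteDimensional ℝ
        ↥(A.toSubmodule ⊓ MvPolynomial.homogeneousSubmodule (Fin (n + 1)) ℝ k ⊓
          LinearMap.ker (polyLaplacian n)) :=
      Submodule.finiteDimensional_of_le inf_le_left
    haveI : FiniteDimensional ℝ
        ↥(Submodule.map (LinearMap.mulLeft ℝ (∑ i, (MvPolynomial.X i) ^ 2))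
          (A.toSubmodule ⊓ MvPolynomial.homogeneousSubmodule (Fin (n + 1)) ℝ (k - 2))) :=
      Submodule.finiteDimensional_of_le
        (S₂ := A.toSubmodule ⊓ MvPolynomial.homogeneousSubmodule (Fin (n + 1)) ℝ k)
        (by
          rw [Submodule.map_le_iff_le_comap]
          intro p hp
          exact hMmem k hk p hp)
    have h1 := Submodule.finrank_sup_add_finrank_inf_eq
      (A.toSubmodule ⊓ MvPolynomial.homogeneousSubmodule (Fin (n + 1)) ℝ k ⊓
        LinearMap.ker (polyLaplacian n))
      (Submodule.map (LinearMap.mulLeft ℝ (∑ i, (MvPolynomial.X i) ^ 2))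
        (A.toSubmodule ⊓ MvPolynomial.homogeneousSubmodule (Fin (n + 1)) ℝ (k - 2)))
    rw [(hdisj k hk).eq_bot, finrank_bot, add_zero, ← hdecomp k hk] at h1
    have h2 : finrank ℝ ↥(Submodule.map (LinearMap.mulLeft ℝ (∑ i, (MvPolynomial.X i) ^ 2))
        (A.toSubmodule ⊓ MvPolynomial.homogeneousSubmodule (Fin (n + 1)) ℝ (k - 2))) =
        finrank ℝ ↥(A.toSubmodule ⊓
          MvPolynomial.homogeneousSubmodule (Fin (n + 1)) ℝ (k - 2)) :=
      (((A.toSubmodule ⊓ MvPolynomial.homogeneousSubmodule (Fin (n + 1)) ℝ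
        (k - 2)).equivMapOfInjective _ hinj).finrank_eq).symm
    rw [h2] at h1
    exact h1
  -- low degrees
  have hlow : ∀ k : ℕ, k ≤ 1 →
      A.toSubmodule ⊓ MvPolynomial.homogeneousSubmodule (Fin (n + 1)) ℝ k ⊓
        LinearMap.ker (polyLaplacian n) =
      A.toSubmodule ⊓ MvPolynomial.homogeneousSubmodule (Fin (n + 1)) ℝ k := by
    intro k hk
    apply inf_eq_left.mpr
    intro p hp
    exact LinearMap.mem_ker.mpr (laplacian_eq_zero_of_le_one n hp.2 hk)
  -- power series identity
  apply PowerSeries.ext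
  intro k
  rw [PowerSeries.coeff_mk]
  have hrhs : (PowerSeries.coeff k)
      ((1 - (PowerSeries.X : PowerSeries ℝ) ^ 2) * PowerSeries.mk (fun k =>
        (finrank ℝ ↥(A.toSubmodule ⊓
          MvPolynomial.homogeneousSubmodule (Fin (n + 1)) ℝ k) : ℝ))) =
      (finrank ℝ ↥(A.toSubmodule ⊓ MvPolynomial.homogeneousSubmodule (Fin (n + 1)) ℝ k) : ℝ) -
      (if 2 ≤ k then (finrank ℝ ↥(A.toSubmodule ⊓
        MvPolynomial.homogeneousSubmodule (Fin (n + 1)) ℝ (k - 2)) : ℝ) else 0) := by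
    rw [sub_mul, one_mul, map_sub, PowerSeries.coeff_mk, PowerSeries.coeff_X_pow_mul',
      PowerSeries.coeff_mk]
  rw [hrhs]
  by_cases hk : 2 ≤ k
  · rw [if_pos hk, hcount k hk]
    push_cast
    ring
  · rw [if_neg hk, sub_zero, hlow k (by omega)]
end
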